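/- Let H be a finite-dimensional Hilbert space over ℝ or ℂ, let A, B be self-adjoint positive-definite operators on H, and let T be a self-adjoint operator on H such that Re⟨Th,h⟩ ≥ 2·√(Re⟨Ah,h⟩·Re⟨Bh,h⟩) for all h ∈ H. Then trace T ≥ 2·√(trace A · trace B), where all three traces are real numbers. -/

import Mathlib

open RCLike

set_option linter.unusedSectionVars false
set_option maxHeartbeats 1000000

section Aux
open Finset
variable {𝕜 : Type*} [RCLike 𝕜] {H : Type*} [NormedAddCommGroup H]
    [InnerProductSpace 𝕜 H]

theorem inner_combo (u v : H) (p q r t : ℝ) :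
    (inner 𝕜 ((p:𝕜) • u + (q:𝕜) • v) ((r:𝕜) • u + (t:𝕜) • v) : 𝕜)
      = (p*r : ℝ) * inner 𝕜 u u + (p*t : ℝ) * inner 𝕜 u v
        + (q*r : ℝ) * inner 𝕜 v u + (q*t : ℝ) * inner 𝕜 v v := by
  simp only [inner_add_left, inner_add_right, inner_smul_left, inner_smul_right, conj_ofReal]
  push_cast
  ring

theorem rotate_orthonormal {ι : Type*} [DecidableEq ι] {v : ι → H} (hv : Orthonormal 𝕜 v)
    {i j : ι} (hij : i ≠ j) {c s : ℝ} (hcs : c*c + s*s = 1) :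
    Orthonormal 𝕜 (fun k => if k = i then (c:𝕜) • v i + (s:𝕜) • v j
      else if k = j then ((-s : ℝ):𝕜) • v i + (c:𝕜) • v j else v k) := by
  have hji : ¬ j = i := fun h => hij h.symm

  rw [orthonormal_iff_ite] at hv ⊢
  intro k l
  by_cases hk : k = i <;> by_cases hk2 : k = j <;> by_cases hl : l = i <;> by_cases hl2 : l = j <;>
    simp_all [eq_comm, inner_combo, inner_add_left, inner_add_right, inner_smul_left,
      inner_smul_right, conj_ofReal, algebraMap_eq_ofReal, -inner_self_eq_norm_sq_to_K] <;>
    (have hcs' : (c:𝕜)*(c:𝕜)+(s:𝕜)*(s:𝕜) = 1 := by exact_mod_cast hcs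
     first
       | ring1
       | linear_combination hcs'
       | linear_combination -hcs'
       | linear_combination (2:𝕜)*hcs'
       | linear_combination (-2:𝕜)*hcs')

theorem f_combo (D : H →ₗ[𝕜] H) (u v : H) (p q : ℝ) :
    re (inner 𝕜 ((p:𝕜) • u + (q:𝕜) • v) (D ((p:𝕜) • u + (q:𝕜) • v)) : 𝕜)
      = p*p * re (inner 𝕜 u (D u) : 𝕜) + p*q * re (inner 𝕜 u (D v) : 𝕜)
        + q*p * re (inner 𝕜 v (D u) : 𝕜) + q*q * re (inner 𝕜 v (D v) : 𝕜) := by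
  rw [map_add, map_smul, map_smul]
  simp only [inner_add_left, inner_add_right, inner_smul_left, inner_smul_right, conj_ofReal,
    map_add, ← ofReal_mul, re_ofReal_mul]
  ring

theorem rotate_sum (D : H →ₗ[𝕜] H) (u v : H) {c s : ℝ} (hcs : c*c + s*s = 1) :
    re (inner 𝕜 ((c:𝕜) • u + (s:𝕜) • v) (D ((c:𝕜) • u + (s:𝕜) • v)) : 𝕜)
      + re (inner 𝕜 (((-s:ℝ):𝕜) • u + (c:𝕜) • v) (D (((-s:ℝ):𝕜) • u + (c:𝕜) • v)) : 𝕜)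
      = re (inner 𝕜 u (D u) : 𝕜) + re (inner 𝕜 v (D v) : 𝕜) := by
  rw [f_combo, f_combo]
  linear_combination (re (inner 𝕜 u (D u) : 𝕜) + re (inner 𝕜 v (D v) : 𝕜)) * hcs

theorem rotate_exists [FiniteDimensional 𝕜 H] (D : H →ₗ[𝕜] H) (u v : H)
    (hu : re (inner 𝕜 u (D u) : 𝕜) < 0) (hv : 0 < re (inner 𝕜 v (D v) : 𝕜)) :
    ∃ c s : ℝ, c*c + s*s = 1 ∧
      re (inner 𝕜 ((c:𝕜) • u + (s:𝕜) • v) (D ((c:𝕜) • u + (s:𝕜) • v)) : 𝕜) = 0 := by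
  set γ : ℝ → H := fun θ => ((Real.cos θ : ℝ):𝕜) • u + ((Real.sin θ : ℝ):𝕜) • v with hγ
  have hγc : Continuous γ := by
    apply Continuous.add
    · exact (continuous_ofReal.comp Real.continuous_cos).smul continuous_const
    · exact (continuous_ofReal.comp Real.continuous_sin).smul continuous_const
  set g : ℝ → ℝ := fun θ => re (inner 𝕜 (γ θ) (D (γ θ)) : 𝕜) with hg
  have hgc : Continuous g :=
    continuous_re.comp (hγc.inner ((D.continuous_of_finiteDimensional).comp hγc))
  have h0 : g 0 = re (inner 𝕜 u (D u) : 𝕜) := by simp [hg, hγ]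
  have h1 : g (Real.pi/2) = re (inner 𝕜 v (D v) : 𝕜) := by simp [hg, hγ]
  have hiv := intermediate_value_Icc (by positivity : (0:ℝ) ≤ Real.pi/2) hgc.continuousOn
  have h0mem : (0:ℝ) ∈ Set.Icc (g 0) (g (Real.pi/2)) := by
    rw [h0, h1]; exact ⟨hu.le, hv.le⟩
  obtain ⟨θ, _, hθ⟩ := hiv h0mem
  exact ⟨Real.cos θ, Real.sin θ, by rw [← Real.sin_sq_add_cos_sq θ]; ring, hθ⟩

theorem zero_diag {ι : Type*} [Fintype ι] [DecidableEq ι] [FiniteDimensional 𝕜 H]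
    (D : H →ₗ[𝕜] H) :
    ∀ (n : ℕ) (v : ι → H), Orthonormal 𝕜 v →
      (∑ i, re (inner 𝕜 (v i) (D (v i)) : 𝕜)) = 0 →
      (univ.filter fun i => re (inner 𝕜 (v i) (D (v i)) : 𝕜) ≠ 0).card ≤ n →
      ∃ w : ι → H, Orthonormal 𝕜 w ∧ ∀ i, re (inner 𝕜 (w i) (D (w i)) : 𝕜) = 0 := by
  intro n
  induction n with
  | zero =>
    intro v hv hsum hcard
    refine ⟨v, hv, fun i => ?_⟩
    by_contra h
    have : i ∈ univ.filter fun i => re (inner 𝕜 (v i) (D (v i)) : 𝕜) ≠ 0 := by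
      simp [h]
    have := card_pos.mpr ⟨i, this⟩
    omega
  | succ n ih =>
    intro v hv hsum hcard
    by_cases hall : ∀ i, re (inner 𝕜 (v i) (D (v i)) : 𝕜) = 0
    · exact ⟨v, hv, hall⟩
    push_neg at hall
    -- there exist i with f < 0 and j with f > 0
    have hneg : ∃ i, re (inner 𝕜 (v i) (D (v i)) : 𝕜) < 0 := by
      by_contra h
      push_neg at h
      obtain ⟨i₀, hi₀⟩ := hall
      have : ∀ i ∈ univ, re (inner 𝕜 (v i) (D (v i)) : 𝕜) = 0 := by
        intro i _
        have := Finset.sum_eq_zero_iff_of_nonneg (fun i _ => h i) |>.mp hsum i (mem_univ i)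
        exact this
      exact hi₀ (this i₀ (mem_univ i₀))
    have hpos : ∃ j, 0 < re (inner 𝕜 (v j) (D (v j)) : 𝕜) := by
      by_contra h
      push_neg at h
      obtain ⟨i₀, hi₀⟩ := hall
      have h' : ∑ i, (- re (inner 𝕜 (v i) (D (v i)) : 𝕜)) = 0 := by
        rw [Finset.sum_neg_distrib, hsum, neg_zero]
      have := Finset.sum_eq_zero_iff_of_nonneg
        (fun i _ => neg_nonneg.mpr (h i)) |>.mp h' i₀ (mem_univ i₀)
      exact hi₀ (by linarith [this])
    obtain ⟨i, hi⟩ := hneg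
    obtain ⟨j, hj⟩ := hpos
    have hij : i ≠ j := fun h => by rw [h] at hi; linarith
    obtain ⟨c, s, hcs, he⟩ := rotate_exists D (v i) (v j) hi hj
    set w : ι → H := fun k => if k = i then (c:𝕜) • v i + (s:𝕜) • v j
      else if k = j then ((-s : ℝ):𝕜) • v i + (c:𝕜) • v j else v k with hw
    have hwon : Orthonormal 𝕜 w := rotate_orthonormal hv hij hcs
    have hwi : re (inner 𝕜 (w i) (D (w i)) : 𝕜) = 0 := by
      simp only [hw, if_pos rfl]; exact he
    have hwj : re (inner 𝕜 (w j) (D (w j)) : 𝕜)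
        = re (inner 𝕜 (v i) (D (v i)) : 𝕜) + re (inner 𝕜 (v j) (D (v j)) : 𝕜)
          - re (inner 𝕜 (w i) (D (w i)) : 𝕜) := by
      have hwjv : w j = ((-s : ℝ):𝕜) • v i + (c:𝕜) • v j := by
        simp [hw, Ne.symm hij]
      have hwiv : w i = (c:𝕜) • v i + (s:𝕜) • v j := by simp [hw]
      rw [hwjv, hwiv]
      linarith [rotate_sum D (v i) (v j) hcs]
    have hwk : ∀ k, k ≠ i → k ≠ j → w k = v k := by
      intro k h1 h2; simp only [hw, if_neg h1, if_neg h2]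
    -- sum is preserved
    have hsum' : (∑ k, re (inner 𝕜 (w k) (D (w k)) : 𝕜)) = 0 := by
      have hji : j ∈ univ.erase i := mem_erase.mpr ⟨Ne.symm hij, mem_univ j⟩
      have e1 : ∀ u : ι → ℝ, ∑ k, u k = (∑ k ∈ (univ.erase i).erase j, u k) + u j + u i := by
        intro u
        rw [Finset.sum_erase_add _ _ hji, Finset.sum_erase_add _ _ (mem_univ i)]
      rw [e1, ← hsum, e1 (fun k => re (inner 𝕜 (v k) (D (v k)) : 𝕜))]
      have : ∀ k ∈ (univ.erase i).erase j,
          re (inner 𝕜 (w k) (D (w k)) : 𝕜) = re (inner 𝕜 (v k) (D (v k)) : 𝕜) := by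
        intro k hk
        rw [hwk k (mem_erase.mp (mem_erase.mp hk).2).1 (mem_erase.mp hk).1]
      rw [Finset.sum_congr rfl this, hwj, hwi]
      ring
    -- filter card decreases
    have hcard' : (univ.filter fun k => re (inner 𝕜 (w k) (D (w k)) : 𝕜) ≠ 0).card ≤ n := by
      have hsub : (univ.filter fun k => re (inner 𝕜 (w k) (D (w k)) : 𝕜) ≠ 0)
          ⊆ (univ.filter fun k => re (inner 𝕜 (v k) (D (v k)) : 𝕜) ≠ 0).erase i := by
        intro k hk
        rw [mem_filter] at hk
        by_cases h1 : k = i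
        · exact absurd (h1 ▸ hk.2) (by simp [hwi])
        by_cases h2 : k = j
        · subst h2
          exact mem_erase.mpr ⟨h1, mem_filter.mpr ⟨mem_univ k, by intro h; rw [h] at hj; linarith⟩⟩
        · rw [hwk k h1 h2] at hk
          exact mem_erase.mpr ⟨h1, mem_filter.mpr ⟨mem_univ k, hk.2⟩⟩
      have hmemi : i ∈ univ.filter fun k => re (inner 𝕜 (v k) (D (v k)) : 𝕜) ≠ 0 :=
        mem_filter.mpr ⟨mem_univ i, by intro h; rw [h] at hi; linarith⟩
      calc (univ.filter fun k => re (inner 𝕜 (w k) (D (w k)) : 𝕜) ≠ 0).card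
          ≤ ((univ.filter fun k => re (inner 𝕜 (v k) (D (v k)) : 𝕜) ≠ 0).erase i).card :=
            card_le_card hsub
        _ = (univ.filter fun k => re (inner 𝕜 (v k) (D (v k)) : 𝕜) ≠ 0).card - 1 :=
            card_erase_of_mem hmemi
        _ ≤ n := by omega
    exact ih w hwon hsum' hcard'

theorem trace_onb {ι : Type*} [Fintype ι] [DecidableEq ι] [FiniteDimensional 𝕜 H]
    (b : OrthonormalBasis ι 𝕜 H) (T : H →ₗ[𝕜] H) :
    LinearMap.trace 𝕜 H T = ∑ i, (inner 𝕜 (b i) (T (b i)) : 𝕜) := by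
  rw [LinearMap.trace_eq_matrix_trace 𝕜 b.toBasis, Matrix.trace]
  congr 1
  ext i
  simp [Matrix.diag, LinearMap.toMatrix_apply, OrthonormalBasis.coe_toBasis_repr_apply,
    OrthonormalBasis.repr_apply_apply, OrthonormalBasis.coe_toBasis]

theorem re_inner_flip (S : H →ₗ[𝕜] H) (x : H) :
    re (inner 𝕜 x (S x) : 𝕜) = re (inner 𝕜 (S x) x : 𝕜) := by
  rw [← inner_conj_symm]
  exact conj_re _

end Aux

/-- Trace version: if `A, B` are self-adjoint positive-definite operators on a
finite-dimensional Hilbert space `H` over `ℝ` or `ℂ` and `T` is a self-adjoint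
operator with `Re⟨Th,h⟩ ≥ 2√(Re⟨Ah,h⟩·Re⟨Bh,h⟩)` for all `h`, then
`trace T ≥ 2√(trace A · trace B)` (all traces being real). -/
theorem three_forms_trace
    {𝕜 : Type*} [RCLike 𝕜] {H : Type*} [NormedAddCommGroup H]
    [InnerProductSpace 𝕜 H] [FiniteDimensional 𝕜 H]
    (A B T : H →ₗ[𝕜] H)
    (hA : A.IsSymmetric) (hB : B.IsSymmetric) (hT : T.IsSymmetric)
    (hApos : ∀ h : H, h ≠ 0 → 0 < re (inner 𝕜 (A h) h))
    (hBpos : ∀ h : H, h ≠ 0 → 0 < re (inner 𝕜 (B h) h))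
    (hineq : ∀ h : H,
      2 * Real.sqrt (re (inner 𝕜 (A h) h) * re (inner 𝕜 (B h) h))
        ≤ re (inner 𝕜 (T h) h)) :
    2 * Real.sqrt (re (LinearMap.trace 𝕜 H A) * re (LinearMap.trace 𝕜 H B))
      ≤ re (LinearMap.trace 𝕜 H T) := by
  by_cases hdim : Module.finrank 𝕜 H = 0
  · have : Subsingleton H := Module.finrank_zero_iff.mp hdim
    have hz : ∀ S : H →ₗ[𝕜] H, S = 0 := fun S => Subsingleton.elim _ _
    rw [hz A, hz B, hz T]
    simp
  · set n := Module.finrank 𝕜 H with hn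
    have hnpos : 0 < n := Nat.pos_of_ne_zero hdim
    have : Nonempty (Fin n) := Fin.pos_iff_nonempty.mp hnpos
    set b := stdOrthonormalBasis 𝕜 H with hb
    -- real trace helper
    have trre : ∀ (S : H →ₗ[𝕜] H) (c : OrthonormalBasis (Fin n) 𝕜 H),
        re (LinearMap.trace 𝕜 H S) = ∑ i, re (inner 𝕜 (c i) (S (c i)) : 𝕜) := by
      intro S c
      rw [trace_onb c S, map_sum]
    set α := re (LinearMap.trace 𝕜 H A) with hα
    set β := re (LinearMap.trace 𝕜 H B) with hβ
    have hbne : ∀ i, b i ≠ 0 := fun i => b.orthonormal.ne_zero i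
    have hαpos : 0 < α := by
      rw [hα, trre A b]
      exact Finset.sum_pos (fun i _ => by
        rw [re_inner_flip]; exact hApos (b i) (hbne i)) Finset.univ_nonempty
    have hβpos : 0 < β := by
      rw [hβ, trre B b]
      exact Finset.sum_pos (fun i _ => by
        rw [re_inner_flip]; exact hBpos (b i) (hbne i)) Finset.univ_nonempty
    set D : H →ₗ[𝕜] H := (β:𝕜) • A - (α:𝕜) • B with hD
    have hDval : ∀ x : H, re (inner 𝕜 x (D x) : 𝕜)
        = β * re (inner 𝕜 x (A x) : 𝕜) - α * re (inner 𝕜 x (B x) : 𝕜) := by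
      intro x
      simp only [hD, LinearMap.sub_apply, LinearMap.smul_apply, inner_sub_right,
        inner_smul_right, map_sub, ← ofReal_mul]
      rw [re_ofReal_mul, re_ofReal_mul]
    have hDsum : (∑ i, re (inner 𝕜 (b i) (D (b i)) : 𝕜)) = 0 := by
      simp only [hDval]
      rw [Finset.sum_sub_distrib, ← Finset.mul_sum, ← Finset.mul_sum,
        ← trre A b, ← trre B b, ← hα, ← hβ]
      ring
    obtain ⟨w, hwon, hwz⟩ := zero_diag D
      ((Finset.univ.filter fun i => re (inner 𝕜 (b i) (D (b i)) : 𝕜) ≠ 0).card)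
      b b.orthonormal hDsum le_rfl
    -- w is an orthonormal basis
    have hspan : ⊤ ≤ Submodule.span 𝕜 (Set.range w) :=
      (hwon.linearIndependent.span_eq_top_of_card_eq_finrank (by simp [hn])).ge
    set ob : OrthonormalBasis (Fin n) 𝕜 H := OrthonormalBasis.mk hwon hspan with hob
    have hobw : ∀ i, ob i = w i := fun i => by rw [hob, OrthonormalBasis.coe_mk]
    set a : Fin n → ℝ := fun i => re (inner 𝕜 (w i) (A (w i)) : 𝕜) with ha
    set bb : Fin n → ℝ := fun i => re (inner 𝕜 (w i) (B (w i)) : 𝕜) with hbb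
    have hwne : ∀ i, w i ≠ 0 := fun i => hwon.ne_zero i
    have hapos : ∀ i, 0 < a i := fun i => by
      show 0 < re (inner 𝕜 (w i) (A (w i)) : 𝕜)
      rw [re_inner_flip]; exact hApos (w i) (hwne i)
    have hbbpos : ∀ i, 0 < bb i := fun i => by
      show 0 < re (inner 𝕜 (w i) (B (w i)) : 𝕜)
      rw [re_inner_flip]; exact hBpos (w i) (hwne i)
    have hαsum : α = ∑ i, a i := by
      rw [hα, trre A ob]; exact Finset.sum_congr rfl fun i _ => by rw [hobw, ha]
    have hβsum : β = ∑ i, bb i := by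
      rw [hβ, trre B ob]; exact Finset.sum_congr rfl fun i _ => by rw [hobw, hbb]
    have hrel : ∀ i, β * a i = α * bb i := fun i => by
      have := hwz i
      rw [hDval] at this
      linarith [this]
    -- per-index sqrt identity
    set r := Real.sqrt (β / α) with hr
    have hsq : ∀ i, Real.sqrt (a i * bb i) = a i * r := by
      intro i
      have hbbi : bb i = (β / α) * a i := by
        field_simp
        linarith [hrel i]
      rw [hbbi, show a i * ((β/α) * a i) = (a i)^2 * (β/α) by ring,
        Real.sqrt_mul (sq_nonneg _), Real.sqrt_sq (hapos i).le, hr]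
    have hfin : Real.sqrt (α * β) = α * r := by
      have : α * β = α^2 * (β/α) := by field_simp
      rw [this, Real.sqrt_mul (sq_nonneg _), Real.sqrt_sq hαpos.le, hr]
    have hT : re (LinearMap.trace 𝕜 H T) = ∑ i, re (inner 𝕜 (w i) (T (w i)) : 𝕜) := by
      rw [trre T ob]; exact Finset.sum_congr rfl fun i _ => by rw [hobw]
    rw [hT, hfin]
    calc 2 * (α * r) = ∑ i, 2 * Real.sqrt (a i * bb i) := by
          simp only [hsq]
          rw [hαsum, Finset.sum_mul, Finset.mul_sum]
      _ ≤ ∑ i, re (inner 𝕜 (w i) (T (w i)) : 𝕜) := by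
          apply Finset.sum_le_sum
          intro i _
          have h1 : a i = re (inner 𝕜 (A (w i)) (w i) : 𝕜) := re_inner_flip A (w i)
          have h2 : bb i = re (inner 𝕜 (B (w i)) (w i) : 𝕜) := re_inner_flip B (w i)
          have h3 : re (inner 𝕜 (w i) (T (w i)) : 𝕜) = re (inner 𝕜 (T (w i)) (w i) : 𝕜) :=
            re_inner_flip T (w i)
          rw [h1, h2, h3]
          exact hineq (w i)
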